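/- Define coefficients c_n^{(k)} by c_n^{(0)} = 1 for all n ≥ 0 and c_n^{(k+1)} = n c_{n-1}^{(k)} + (n+2) c_{n+1}^{(k)} for all k, n ≥ 0 (the term n c_{n-1}^{(k)} vanishing when n = 0). Then for every integer k ≥ 0 and every n ≥ 0, the quotient Δ_n^{(k)}(ε)/ε^k tends to c_n^{(k)} as ε → 0⁺; i.e. the leading part of the expansion of Δ_n^{(k)} at ε = 0 is c_n^{(k)} ε^k (1 + O(ε)). -/

import Mathlib

/-- The map `T` acting on sequences: `T(u)₀ = ε/(1+u₁)`,
`T(u)ₙ = ε(n+1)/(1 + u_{n-1} + u_{n+1})` for `n ≥ 1`. -/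
noncomputable def Tmap (ε : ℝ) (u : ℕ → ℝ) : ℕ → ℝ
  | 0 => ε / (1 + u 1)
  | (n+1) => ε * ((n : ℝ) + 2) / (1 + u n + u (n+2))

/-- Shifted bound sequences: `bnd ε k = b^{(k-1)}`, i.e. `bnd ε 0 = b^{(-1)} = 0`
and `bnd ε (k+1) = T (bnd ε k)`, so that `b^{(k)} = bnd ε (k+1)` for `k ≥ -1`. -/
noncomputable def bnd (ε : ℝ) : ℕ → ℕ → ℝ
  | 0 => fun _ => 0
  | (k+1) => Tmap ε (bnd ε k)

/-- Shifted rescaled bounds: `rho ε k n = ρ_n^{(k-1)} = b_n^{(k-1)}/(ε(n+1))`. -/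
noncomputable def rho (ε : ℝ) (k n : ℕ) : ℝ := bnd ε k n / (ε * ((n : ℝ) + 1))

/-- The differences `Δd ε k n = Δ_n^{(k)} = (-1)^k (ρ_n^{(k)} - ρ_n^{(k-1)})` for `k ≥ 0`. -/
noncomputable def Δd (ε : ℝ) (k n : ℕ) : ℝ := (-1 : ℝ)^k * (rho ε (k+1) n - rho ε k n)

/-- The coefficients `c_n^{(k)}`: `c_n^{(0)} = 1` and
`c_n^{(k+1)} = n c_{n-1}^{(k)} + (n+2) c_{n+1}^{(k)}` (the first term vanishing for `n = 0`). -/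
noncomputable def cc : ℕ → ℕ → ℝ
  | 0, _ => 1
  | (k+1), n => (n : ℝ) * cc k (n-1) + ((n : ℝ) + 2) * cc k (n+1)

noncomputable def Sden (ε : ℝ) (j : ℕ) : ℕ → ℝ
  | 0 => bnd ε j 1
  | (m+1) => bnd ε j m + bnd ε j (m+2)

lemma bnd_nonneg {ε : ℝ} (hε : 0 ≤ ε) : ∀ k n, 0 ≤ bnd ε k n := by
  intro k
  induction k with
  | zero => intro n; simp [bnd]
  | succ k ih =>
    intro n
    cases n with
    | zero =>
      show 0 ≤ ε / (1 + bnd ε k 1)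
      have := ih 1
      rcases le_or_gt (1 + bnd ε k 1) 0 with h | h
      · have : 1 + bnd ε k 1 = 0 ∨ 1 + bnd ε k 1 > 0 := by right; linarith
        linarith
      · exact div_nonneg hε h.le
    | succ m =>
      show 0 ≤ ε * ((m:ℝ)+2) / (1 + bnd ε k m + bnd ε k (m+2))
      have h1 := ih m
      have h2 := ih (m+2)
      exact div_nonneg (by positivity) (by linarith)

lemma Sden_nonneg {ε : ℝ} (hε : 0 ≤ ε) (j n : ℕ) : 0 ≤ Sden ε j n := by
  cases n with
  | zero => exact bnd_nonneg hε j 1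
  | succ m => exact add_nonneg (bnd_nonneg hε j m) (bnd_nonneg hε j (m+2))

open Filter in
lemma bnd_tendsto : ∀ k n, Tendsto (fun ε : ℝ => bnd ε k n)
    (nhdsWithin 0 (Set.Ioi 0)) (nhds 0) := by
  intro k
  induction k with
  | zero => intro n; simp [bnd]
  | succ k ih =>
    have hid : Tendsto (fun ε : ℝ => ε) (nhdsWithin 0 (Set.Ioi 0)) (nhds 0) :=
      tendsto_id.mono_left nhdsWithin_le_nhds
    intro n
    cases n with
    | zero =>
      have : Tendsto (fun ε : ℝ => ε / (1 + bnd ε k 1))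
          (nhdsWithin 0 (Set.Ioi 0)) (nhds (0 / (1 + 0))) :=
        hid.div (tendsto_const_nhds.add (ih 1)) (by norm_num)
      simpa [bnd, Tmap] using this
    | succ m =>
      have : Tendsto (fun ε : ℝ => ε * ((m:ℝ)+2) / (1 + bnd ε k m + bnd ε k (m+2)))
          (nhdsWithin 0 (Set.Ioi 0)) (nhds (0 * ((m:ℝ)+2) / (1 + 0 + 0))) :=
        (hid.mul tendsto_const_nhds).div
          ((tendsto_const_nhds.add (ih m)).add (ih (m+2))) (by norm_num)
      simpa [bnd, Tmap] using this

open Filter in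
lemma Sden_tendsto (j n : ℕ) : Tendsto (fun ε : ℝ => Sden ε j n)
    (nhdsWithin 0 (Set.Ioi 0)) (nhds 0) := by
  cases n with
  | zero => exact bnd_tendsto j 1
  | succ m => simpa [Sden] using (bnd_tendsto j m).add (bnd_tendsto j (m+2))

lemma myDivDiv (a D : ℝ) (ha : a ≠ 0) : (a / D) / a = 1 / D := by
  rw [div_div, mul_comm, ← div_div, div_self ha]

lemma rho_succ (ε : ℝ) (hε : ε ≠ 0) (j n : ℕ) :
    rho ε (j+1) n = 1 / (1 + Sden ε j n) := by
  have hb : bnd ε (j+1) n = Tmap ε (bnd ε j) n := rfl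
  cases n with
  | zero =>
    simp only [rho, hb, Tmap, Sden, Nat.cast_zero, zero_add, mul_one]
    exact myDivDiv ε _ hε
  | succ m =>
    simp only [rho, hb, Tmap, Sden]
    have h2 : (ε * (((m:ℕ)+1 : ℕ) : ℝ) + ε * 1) = ε * ((m:ℝ)+2) := by push_cast; ring
    have h3 : (ε * ((((m:ℕ)+1 : ℕ) : ℝ) + 1)) = ε * ((m:ℝ)+2) := by push_cast; ring
    rw [h3, ← add_assoc]
    exact myDivDiv (ε * ((m:ℝ)+2)) _ (by
      have : ((m:ℝ)+2) ≠ 0 := by positivity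
      exact mul_ne_zero hε this)

lemma Sden_zero (ε : ℝ) (n : ℕ) : Sden ε 0 n = 0 := by
  cases n <;> simp [Sden, bnd]

lemma delta_rec (ε : ℝ) (hε : 0 < ε) (k n : ℕ) :
    Δd ε (k+1) n / ε^(k+1) =
      ((n:ℝ) * (Δd ε k (n-1) / ε^k) + ((n:ℝ)+2) * (Δd ε k (n+1) / ε^k)) /
        ((1 + Sden ε k n) * (1 + Sden ε (k+1) n)) := by
  have hε' : ε ≠ 0 := hε.ne'
  have hpk : (ε:ℝ)^k ≠ 0 := pow_ne_zero _ hε'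
  cases n with
  | zero =>
    have hA : (1:ℝ) + bnd ε k 1 ≠ 0 := by
      have := bnd_nonneg hε.le k 1; positivity
    have hB : (1:ℝ) + bnd ε (k+1) 1 ≠ 0 := by
      have := bnd_nonneg hε.le (k+1) 1; positivity
    simp only [Δd, Nat.zero_sub]
    rw [rho_succ ε hε' (k+1) 0, rho_succ ε hε' k 0]
    simp only [rho, Sden, Nat.cast_zero, Nat.cast_one, zero_add, mul_one]
    field_simp
    ring
  | succ m =>
    have h0 := bnd_nonneg hε.le k m
    have h1 := bnd_nonneg hε.le k (m+2)
    have h2 := bnd_nonneg hε.le (k+1) m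
    have h3 := bnd_nonneg hε.le (k+1) (m+2)
    have hA : (1:ℝ) + (bnd ε k m + bnd ε k (m+2)) ≠ 0 := by positivity
    have hB : (1:ℝ) + (bnd ε (k+1) m + bnd ε (k+1) (m+2)) ≠ 0 := by positivity
    have hm1 : ((m:ℝ) + 1) ≠ 0 := by positivity
    have hm3 : ((m:ℝ) + 3) ≠ 0 := by positivity
    simp only [Δd, Nat.add_sub_cancel]
    rw [rho_succ ε hε' (k+1) (m+1), rho_succ ε hε' k (m+1)]
    simp only [rho, Sden, Nat.cast_add, Nat.cast_one, Nat.cast_ofNat]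
    field_simp
    ring


open Filter in
/-- The leading part of the expansion of `Δ_n^{(k)}` at `ε = 0` is `c_n^{(k)} ε^k (1 + O(ε))`:
`Δ_n^{(k)}(ε)/ε^k → c_n^{(k)}` as `ε → 0⁺`. -/
theorem statement10 (k n : ℕ) :
    Filter.Tendsto (fun ε : ℝ => Δd ε k n / ε^k) (nhdsWithin 0 (Set.Ioi 0))
      (nhds (cc k n)) := by
  induction k generalizing n with
  | zero =>
    have h1 : (fun _ : ℝ => (1:ℝ)) =ᶠ[nhdsWithin (0:ℝ) (Set.Ioi 0)]
        (fun ε : ℝ => Δd ε 0 n / ε^0) := by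
      filter_upwards [self_mem_nhdsWithin] with ε hε
      have hε : (0:ℝ) < ε := hε
      rw [pow_zero, div_one, Δd, rho_succ ε hε.ne' 0 n, Sden_zero]
      simp [rho, bnd]
    have : cc 0 n = 1 := rfl
    rw [this]
    exact Tendsto.congr' h1 tendsto_const_nhds
  | succ k ih =>
    have hnum : Tendsto (fun ε : ℝ =>
        (n:ℝ) * (Δd ε k (n-1) / ε^k) + ((n:ℝ)+2) * (Δd ε k (n+1) / ε^k))
        (nhdsWithin 0 (Set.Ioi 0))
        (nhds ((n:ℝ) * cc k (n-1) + ((n:ℝ)+2) * cc k (n+1))) :=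
      (tendsto_const_nhds.mul (ih (n-1))).add (tendsto_const_nhds.mul (ih (n+1)))
    have hden : Tendsto (fun ε : ℝ => (1 + Sden ε k n) * (1 + Sden ε (k+1) n))
        (nhdsWithin 0 (Set.Ioi 0)) (nhds ((1+0) * (1+0))) :=
      (tendsto_const_nhds.add (Sden_tendsto k n)).mul
        (tendsto_const_nhds.add (Sden_tendsto (k+1) n))
    have hdiv := hnum.div hden (by norm_num)
    have hlim : ((n:ℝ) * cc k (n-1) + ((n:ℝ)+2) * cc k (n+1)) / ((1+0) * (1+0))
        = cc (k+1) n := by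
      rw [show cc (k+1) n = (n:ℝ) * cc k (n-1) + ((n:ℝ)+2) * cc k (n+1) from rfl]
      norm_num
    rw [hlim] at hdiv
    refine Tendsto.congr' ?_ hdiv
    filter_upwards [self_mem_nhdsWithin] with ε hε
    exact (delta_rec ε hε k n).symm
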